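/- Let Λ ≠ ℕ be a numerical semigroup with conductor c = c(Λ) and multiplicity m = m(Λ). Then the right generators of Λ are exactly the integers λ with c ≤ λ < c+m that are not the sum of two left elements of Λ; hence the number of children of Λ equals the number of such integers. In particular, the nontrivial ordinary semigroup {0} ∪ {n : n ≥ m} (m ≥ 2) has exactly m children, and the rank-2 semigroup {0, m} ∪ {n : n ≥ m+u} with 1 < u ≤ m has exactly m−1 children. -/
import Mathlib


/-- A numerical semigroup: a cofinite submonoid of ℕ, viewed as a set of naturals. -/
def IsNumericalSemigroup (S : Set ℕ) : Prop :=
  0 ∈ S ∧ (∀ a ∈ S, ∀ b ∈ S, a + b ∈ S) ∧ ∃ N : ℕ, ∀ n : ℕ, N ≤ n → n ∈ S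

/-- The conductor: the smallest `N` such that every `n ≥ N` belongs to `S`. -/
noncomputable def sgConductor (S : Set ℕ) : ℕ :=
  sInf {N : ℕ | ∀ n : ℕ, N ≤ n → n ∈ S}

/-- The genus: the number of gaps. -/
noncomputable def sgGenus (S : Set ℕ) : ℕ :=
  Sᶜ.ncard

/-- The rank `k(Λ) = c(Λ) - g(Λ)`. -/
noncomputable def sgRank (S : Set ℕ) : ℕ :=
  sgConductor S - sgGenus S

/-- The multiplicity: the smallest nonzero element. -/
noncomputable def sgMultiplicity (S : Set ℕ) : ℕ :=
  sInf {n : ℕ | n ∈ S ∧ n ≠ 0}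

/-- The Frobenius number: the largest gap, i.e. the conductor minus one. -/
noncomputable def sgFrobenius (S : Set ℕ) : ℕ :=
  sgConductor S - 1

/-- `sgElem S j` is the element `λ_j` of `S = {λ_0 = 0 < λ_1 < λ_2 < ⋯}`. -/
noncomputable def sgElem (S : Set ℕ) (j : ℕ) : ℕ :=
  Nat.nth (· ∈ S) j

/-- The jump `u_j = λ_{j+1} - λ_j`. -/
noncomputable def sgJump (S : Set ℕ) (j : ℕ) : ℕ :=
  sgElem S (j + 1) - sgElem S j

/-- The left elements: elements of `S` smaller than the Frobenius number. -/
def sgLeftElements (S : Set ℕ) : Set ℕ :=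
  {x : ℕ | x ∈ S ∧ x + 1 < sgConductor S}

/-- A minimal generator: a nonzero element not the sum of two nonzero elements. -/
def IsMinimalGenerator (S : Set ℕ) (x : ℕ) : Prop :=
  x ∈ S ∧ x ≠ 0 ∧ ¬ ∃ a ∈ S, ∃ b ∈ S, a ≠ 0 ∧ b ≠ 0 ∧ a + b = x

/-- A right generator: a minimal generator larger than the Frobenius number. -/
def IsRightGenerator (S : Set ℕ) (x : ℕ) : Prop :=
  IsMinimalGenerator S x ∧ sgFrobenius S < x

/-- A strong generator: a right generator `μ` such that `μ + m(Λ)` is a minimal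
generator of `Λ ∖ {μ}`. -/
noncomputable def IsStrongGenerator (S : Set ℕ) (x : ℕ) : Prop :=
  IsRightGenerator S x ∧ IsMinimalGenerator (S \ {x}) (x + sgMultiplicity S)

/-- A new generator of `Λ`: a minimal generator of `Λ` that is not a minimal
generator of `Λ ∪ {F(Λ)}`. -/
noncomputable def IsNewGenerator (S : Set ℕ) (x : ℕ) : Prop :=
  IsMinimalGenerator S x ∧ ¬ IsMinimalGenerator (S ∪ {sgFrobenius S}) x

/-- `x` (an element `λ_s ≥ c(Λ)`) is an order-`p` seed of `Λ` if
`x + λ_p ≠ λ_i + λ_j` for all `p < i ≤ j < s`, i.e. for all `i ≤ j` with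
`p < i` and `λ_j < x`. -/
noncomputable def IsSeed (S : Set ℕ) (p x : ℕ) : Prop :=
  sgConductor S ≤ x ∧ ∀ i j : ℕ, p < i → i ≤ j → sgElem S j < x →
    x + sgElem S p ≠ sgElem S i + sgElem S j

/-- `T` is a child of `S`: obtained by removing one right generator. -/
def IsChild (T S : Set ℕ) : Prop :=
  ∃ μ : ℕ, IsRightGenerator S μ ∧ T = S \ {μ}

/-- A grandchild: a child of a child. -/
def IsGrandchild (T S : Set ℕ) : Prop :=
  ∃ C : Set ℕ, IsChild C S ∧ IsChild T C

/-- A great-grandchild: a child of a grandchild. -/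
def IsGreatGrandchild (T S : Set ℕ) : Prop :=
  ∃ C : Set ℕ, IsGrandchild C S ∧ IsChild T C

/-- `⟨a,b,c,…⟩|_κ`: the smallest numerical semigroup containing a given set. -/
def sgClosure (A : Set ℕ) : Set ℕ :=
  ⋂₀ {S : Set ℕ | IsNumericalSemigroup S ∧ A ⊆ S}



section NSHelpers

variable {S : Set ℕ}

lemma ns_cond_mem (h : IsNumericalSemigroup S) : ∀ n, sgConductor S ≤ n → n ∈ S :=
  Nat.sInf_mem h.2.2

lemma ns_cond_pos (h : IsNumericalSemigroup S) (hne : S ≠ Set.univ) :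
    1 ≤ sgConductor S := by
  by_contra hc
  push_neg at hc
  apply hne
  ext n
  simp only [Set.mem_univ, iff_true]
  exact ns_cond_mem h n (by omega)

lemma ns_frob_notMem (h : IsNumericalSemigroup S) (hne : S ≠ Set.univ) :
    sgConductor S - 1 ∉ S := by
  have hc := ns_cond_pos h hne
  intro hmem
  have hset : sgConductor S - 1 ∈ {N : ℕ | ∀ n : ℕ, N ≤ n → n ∈ S} := by
    intro n hn
    rcases eq_or_lt_of_le hn with he | hlt
    · exact he ▸ hmem
    · exact ns_cond_mem h n (by omega)
  have := Nat.sInf_le hset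
  have h2 : sgConductor S ≤ sgConductor S - 1 := this
  omega

lemma ns_mult_le {n : ℕ} (hn : n ∈ S) (h0 : n ≠ 0) : sgMultiplicity S ≤ n :=
  Nat.sInf_le ⟨hn, h0⟩

lemma ns_mult_spec (h : IsNumericalSemigroup S) (hne : S ≠ Set.univ) :
    sgMultiplicity S ∈ S ∧ sgMultiplicity S ≠ 0 := by
  have hc := ns_cond_pos h hne
  have hnonempty : ({n : ℕ | n ∈ S ∧ n ≠ 0}).Nonempty :=
    ⟨sgConductor S, ns_cond_mem h _ le_rfl, by omega⟩
  exact Nat.sInf_mem hnonempty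

lemma ns_rightgen_iff (h : IsNumericalSemigroup S) (hne : S ≠ Set.univ) (μ : ℕ) :
    IsRightGenerator S μ ↔
      (sgConductor S ≤ μ ∧ μ < sgConductor S + sgMultiplicity S ∧
        ¬ ∃ a ∈ sgLeftElements S, ∃ b ∈ sgLeftElements S, a + b = μ) := by
  have hc := ns_cond_pos h hne
  have hF := ns_frob_notMem h hne
  obtain ⟨hmS, hm0⟩ := ns_mult_spec h hne
  constructor
  · rintro ⟨⟨hμS, hμ0, hmin⟩, hFμ⟩
    have hcμ : sgConductor S ≤ μ := by
      unfold sgFrobenius at hFμ; omega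
    refine ⟨hcμ, ?_, ?_⟩
    · by_contra hge
      push_neg at hge
      have hb : μ - sgMultiplicity S ∈ S := ns_cond_mem h _ (by omega)
      exact hmin ⟨_, hmS, _, hb, hm0, by omega, by omega⟩
    · rintro ⟨a, ⟨haS, hal⟩, b, ⟨hbS, hbl⟩, hab⟩
      exact hmin ⟨a, haS, b, hbS, by omega, by omega, hab⟩
  · rintro ⟨hcμ, hlt, hsum⟩
    have hμS : μ ∈ S := ns_cond_mem h μ hcμ
    refine ⟨⟨hμS, by omega, ?_⟩, by unfold sgFrobenius; omega⟩
    rintro ⟨a, haS, b, hbS, ha0, hb0, hab⟩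
    have hma := ns_mult_le haS ha0
    have hmb := ns_mult_le hbS hb0
    have haF : a ≠ sgConductor S - 1 := fun e => hF (e ▸ haS)
    have hbF : b ≠ sgConductor S - 1 := fun e => hF (e ▸ hbS)
    exact hsum ⟨a, ⟨haS, by omega⟩, b, ⟨hbS, by omega⟩, hab⟩

lemma ns_children_count (h : IsNumericalSemigroup S) (hne : S ≠ Set.univ) :
    {T : Set ℕ | IsChild T S}.ncard =
      {μ : ℕ | sgConductor S ≤ μ ∧ μ < sgConductor S + sgMultiplicity S ∧
        ¬ ∃ a ∈ sgLeftElements S, ∃ b ∈ sgLeftElements S, a + b = μ}.ncard := by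
  set M := {μ : ℕ | sgConductor S ≤ μ ∧ μ < sgConductor S + sgMultiplicity S ∧
    ¬ ∃ a ∈ sgLeftElements S, ∃ b ∈ sgLeftElements S, a + b = μ} with hM
  have himg : {T : Set ℕ | IsChild T S} = (fun μ => S \ {μ}) '' M := by
    ext T
    simp only [Set.mem_setOf_eq, Set.mem_image]
    constructor
    · rintro ⟨μ, hμ, rfl⟩
      exact ⟨μ, (ns_rightgen_iff h hne μ).1 hμ, rfl⟩
    · rintro ⟨μ, hμ, rfl⟩
      exact ⟨μ, (ns_rightgen_iff h hne μ).2 hμ, rfl⟩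
  rw [himg, Set.ncard_image_of_injOn]
  intro a ha b hb hab
  have haS : a ∈ S := ns_cond_mem h a ha.1
  by_contra hne'
  have hmem : a ∈ S \ {b} := ⟨haS, hne'⟩
  have hab2 : S \ {a} = S \ {b} := hab
  rw [← hab2] at hmem
  exact hmem.2 rfl

end NSHelpers

theorem statement8 :
    (∀ S : Set ℕ, IsNumericalSemigroup S → S ≠ Set.univ →
      ((∀ μ : ℕ, IsRightGenerator S μ ↔
          (sgConductor S ≤ μ ∧ μ < sgConductor S + sgMultiplicity S ∧
            ¬ ∃ a ∈ sgLeftElements S, ∃ b ∈ sgLeftElements S, a + b = μ)) ∧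
        {T : Set ℕ | IsChild T S}.ncard =
          {μ : ℕ | sgConductor S ≤ μ ∧ μ < sgConductor S + sgMultiplicity S ∧
            ¬ ∃ a ∈ sgLeftElements S, ∃ b ∈ sgLeftElements S, a + b = μ}.ncard)) ∧
    (∀ m : ℕ, 2 ≤ m →
      {T : Set ℕ | IsChild T (({0} : Set ℕ) ∪ {n : ℕ | m ≤ n})}.ncard = m) ∧
    (∀ m u : ℕ, 1 < u → u ≤ m →
      {T : Set ℕ | IsChild T (({0, m} : Set ℕ) ∪ {n : ℕ | m + u ≤ n})}.ncard = m - 1) := by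
  refine ⟨fun S hS hne => ⟨ns_rightgen_iff hS hne, ns_children_count hS hne⟩, ?_, ?_⟩
  · intro m hm
    set S : Set ℕ := ({0} : Set ℕ) ∪ {n : ℕ | m ≤ n} with hSdef
    have hmem : ∀ x, x ∈ S ↔ x = 0 ∨ m ≤ x := by
      intro x
      simp [hSdef]
    have hns : IsNumericalSemigroup S := by
      refine ⟨(hmem 0).2 (Or.inl rfl), ?_, m, fun n hn => (hmem n).2 (Or.inr hn)⟩
      intro a ha b hb
      rw [hmem] at ha hb ⊢
      omega
    have hne : S ≠ Set.univ := by
      intro hu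
      have h1 : (1:ℕ) ∈ S := hu ▸ Set.mem_univ 1
      rw [hmem] at h1
      omega
    have hcond : sgConductor S = m := by
      have h1 : m ∈ {N : ℕ | ∀ n : ℕ, N ≤ n → n ∈ S} := fun n hn => (hmem n).2 (Or.inr hn)
      have h2 : sgConductor S ≤ m := Nat.sInf_le h1
      rcases Nat.lt_or_ge (sgConductor S) m with hlt | hge
      · have := (hmem (m-1)).1 (ns_cond_mem hns (m-1) (by omega))
        omega
      · omega
    have hmul : sgMultiplicity S = m := by
      have h1 : sgMultiplicity S ≤ m := ns_mult_le ((hmem m).2 (Or.inr le_rfl)) (by omega)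
      obtain ⟨hmS, hm0⟩ := ns_mult_spec hns hne
      rw [hmem] at hmS
      omega
    have hleft : ∀ x, x ∈ sgLeftElements S ↔ x = 0 := by
      intro x
      unfold sgLeftElements
      rw [Set.mem_setOf_eq, hmem, hcond]
      omega
    rw [ns_children_count hns hne, hcond, hmul]
    have hset : {μ : ℕ | m ≤ μ ∧ μ < m + m ∧
        ¬ ∃ a ∈ sgLeftElements S, ∃ b ∈ sgLeftElements S, a + b = μ}
        = ↑(Finset.Ico m (m + m)) := by
      ext μ
      simp only [Set.mem_setOf_eq, Finset.coe_Ico, Set.mem_Ico]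
      constructor
      · rintro ⟨h1, h2, _⟩
        exact ⟨h1, h2⟩
      · rintro ⟨h1, h2⟩
        refine ⟨h1, h2, ?_⟩
        rintro ⟨a, ha, b, hb, hab⟩
        rw [hleft] at ha hb
        omega
    rw [hset, Set.ncard_coe_finset, Nat.card_Ico]
    omega
  · intro m u hu hum
    set S : Set ℕ := ({0, m} : Set ℕ) ∪ {n : ℕ | m + u ≤ n} with hSdef
    have hmem : ∀ x, x ∈ S ↔ x = 0 ∨ x = m ∨ m + u ≤ x := by
      intro x
      simp [hSdef]
      tauto
    have hns : IsNumericalSemigroup S := by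
      refine ⟨(hmem 0).2 (Or.inl rfl), ?_, m + u, fun n hn => (hmem n).2 (Or.inr (Or.inr hn))⟩
      intro a ha b hb
      rw [hmem] at ha hb ⊢
      omega
    have hne : S ≠ Set.univ := by
      intro hu'
      have h1 : (1:ℕ) ∈ S := hu' ▸ Set.mem_univ 1
      rw [hmem] at h1
      omega
    have hcond : sgConductor S = m + u := by
      have h1 : m + u ∈ {N : ℕ | ∀ n : ℕ, N ≤ n → n ∈ S} :=
        fun n hn => (hmem n).2 (Or.inr (Or.inr hn))
      have h2 : sgConductor S ≤ m + u := Nat.sInf_le h1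
      rcases Nat.lt_or_ge (sgConductor S) (m + u) with hlt | hge
      · have := (hmem (m + u - 1)).1 (ns_cond_mem hns (m + u - 1) (by omega))
        omega
      · omega
    have hmul : sgMultiplicity S = m := by
      have h1 : sgMultiplicity S ≤ m :=
        ns_mult_le ((hmem m).2 (Or.inr (Or.inl rfl))) (by omega)
      obtain ⟨hmS, hm0⟩ := ns_mult_spec hns hne
      rw [hmem] at hmS
      omega
    have hleft : ∀ x, x ∈ sgLeftElements S ↔ x = 0 ∨ x = m := by
      intro x
      unfold sgLeftElements
      rw [Set.mem_setOf_eq, hmem, hcond]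
      omega
    rw [ns_children_count hns hne, hcond, hmul]
    have hset : {μ : ℕ | m + u ≤ μ ∧ μ < m + u + m ∧
        ¬ ∃ a ∈ sgLeftElements S, ∃ b ∈ sgLeftElements S, a + b = μ}
        = ↑((Finset.Ico (m + u) (m + u + m)).erase (m + m)) := by
      ext μ
      simp only [Set.mem_setOf_eq, Finset.coe_erase, Set.mem_diff, Finset.coe_Ico,
        Set.mem_Ico, Set.mem_singleton_iff]
      constructor
      · rintro ⟨h1, h2, h3⟩
        refine ⟨⟨h1, h2⟩, ?_⟩
        intro he
        exact h3 ⟨m, (hleft m).2 (Or.inr rfl), m, (hleft m).2 (Or.inr rfl), he.symm⟩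
      · rintro ⟨⟨h1, h2⟩, h3⟩
        refine ⟨h1, h2, ?_⟩
        rintro ⟨a, ha, b, hb, hab⟩
        rw [hleft] at ha hb
        omega
    rw [hset, Set.ncard_coe_finset,
      Finset.card_erase_of_mem (Finset.mem_Ico.2 ⟨by omega, by omega⟩), Nat.card_Ico]
    omega
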